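/- Median-of-means bound: Let G be a real random variable with mean μ and variance σ². Take ℓ independent empirical means Ḡ₁,…,Ḡ_ℓ, each over k i.i.d. samples of G, and let M = median(Ḡ₁,…,Ḡ_ℓ). Then for any ε > 0 with σ²/(kε²) < 1/2, Pr(|M - μ| > ε) ≤ exp(-2ℓ·(1/2 - σ²/(kε²))²). -/

import Mathlib

open MeasureTheory ProbabilityTheory

section AuxLemmas

open Real

lemma hoeff_base {δ : ℝ} (hδ : 0 ≤ δ) :
    (1/2+δ) * Real.exp (-(2*δ)) + (1/2-δ) * Real.exp (2*δ) ≤ 1 - 2*δ^2 := by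
  set f : ℝ → ℝ := fun x => 1 - 2*x^2 - ((1/2+x) * Real.exp (-(2*x)) + (1/2-x) * Real.exp (2*x))
    with hf
  have hderiv : ∀ x : ℝ, HasDerivAt f (2*x*(Real.exp (2*x) + Real.exp (-(2*x)) - 2)) x := by
    intro x
    have e1 : HasDerivAt (fun y : ℝ => Real.exp (-(2*y))) (Real.exp (-(2*x)) * -(2*1)) x :=
      (((hasDerivAt_id x).const_mul 2).neg).exp
    have e2 : HasDerivAt (fun y : ℝ => Real.exp (2*y)) (Real.exp (2*x) * (2*1)) x :=
      ((hasDerivAt_id x).const_mul 2).exp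
    have a3 := ((hasDerivAt_id x).const_add (1/2:ℝ)).mul e1
    have a4 := ((hasDerivAt_id x).const_sub (1/2:ℝ)).mul e2
    have a5 := ((hasDerivAt_pow 2 x).const_mul (2:ℝ)).const_sub (1:ℝ)
    have total := a5.sub (a3.add a4)
    rw [hf]
    refine total.congr_deriv ?_
    simp only [id_eq, Nat.cast_ofNat]
    ring
  have hmono : MonotoneOn f (Set.Ici (0:ℝ)) := by
    apply monotoneOn_of_deriv_nonneg (convex_Ici 0)
    · exact fun x _ => (hderiv x).differentiableAt.continuousAt.continuousWithinAt
    · exact fun x _ => (hderiv x).differentiableAt.differentiableWithinAt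
    · intro x hx
      rw [(hderiv x).deriv]
      have hx0 : 0 ≤ x := le_of_lt (by simpa using hx)
      have h2 : (2:ℝ) ≤ Real.exp (2*x) + Real.exp (-(2*x)) := by
        have a := Real.add_one_le_exp (2*x)
        have b := Real.add_one_le_exp (-(2*x))
        linarith
      have : 0 ≤ Real.exp (2*x) + Real.exp (-(2*x)) - 2 := by linarith
      positivity
  have h0 : f 0 = 0 := by norm_num [hf]
  have := hmono (Set.self_mem_Ici) (Set.mem_Ici.mpr hδ) hδ
  rw [h0] at this
  simp only [hf] at this
  linarith

end AuxLemmas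

/-- The median of a tuple of reals: middle element of the sorted list. -/
noncomputable def tupleMedian {l : ℕ} (x : Fin l → ℝ) : ℝ :=
  ((List.ofFn x).mergeSort (· ≤ ·)).getD (l / 2) 0

lemma median_count {l : ℕ} (hl : 0 < l) (x : Fin l → ℝ) (m ε : ℝ)
    (h : ε < |tupleMedian x - m|) :
    l ≤ 2 * (Finset.univ.filter (fun i => ε < |x i - m|)).card := by
  classical
  set L := (List.ofFn x).mergeSort (fun a b => decide (a ≤ b)) with hL
  have hlen : L.length = l := by
    rw [hL, List.length_mergeSort, List.length_ofFn]
  have hperm : L.Perm (List.ofFn x) := List.mergeSort_perm _ _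
  have hsorted : ∀ i j : Fin L.length, i < j → L.get i ≤ L.get j := by
    have hp : List.Pairwise (fun a b : ℝ => a ≤ b) L := by
      have := List.pairwise_mergeSort (le := fun a b : ℝ => decide (a ≤ b))
        (fun a b c => by simp; exact le_trans) (fun a b => by simp; exact le_total a b)
        (List.ofFn x)
      rw [← hL] at this
      simpa using this
    intro i j hij
    exact List.pairwise_iff_get.mp hp i j hij
  have hsorted' : ∀ i j : Fin L.length, i.1 ≤ j.1 → L.get i ≤ L.get j := by
    intro i j hij
    rcases eq_or_lt_of_le hij with heq | hlt
    · have : i = j := Fin.ext heq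
      rw [this]
    · exact hsorted i j hlt
  have hcount : ∀ (p : ℝ → Prop) [DecidablePred p],
      L.countP (fun a => decide (p a)) = (Finset.univ.filter (fun i => p (x i))).card := by
    intro p hp
    rw [hperm.countP_eq]
    rw [List.ofFn_eq_map, List.countP_map]
    rw [Finset.card_filter]
    simp [List.countP_eq_length_filter, Finset.sum_boole, Fin.univ_def, Finset.card,
      Multiset.filter_coe]
    rfl
  have hmid : l / 2 < L.length := by rw [hlen]; omega
  have hmed : tupleMedian x = L[l/2] := by
    rw [tupleMedian, ← hL]  -- hL may not match due to decide coercion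
    exact List.getD_eq_getElem L 0 hmid
  -- monotone inclusion of filters
  have hsub1 : (Finset.univ.filter (fun i => m + ε < x i)).card ≤
      (Finset.univ.filter (fun i : Fin l => ε < |x i - m|)).card := by
    apply Finset.card_le_card
    apply Finset.monotone_filter_right
    intro i _ hi
    rw [lt_abs]; left; linarith
  have hsub2 : (Finset.univ.filter (fun i => x i < m - ε)).card ≤
      (Finset.univ.filter (fun i : Fin l => ε < |x i - m|)).card := by
    apply Finset.card_le_card
    apply Finset.monotone_filter_right
    intro i _ hi
    rw [lt_abs]; right; linarith
  rw [lt_abs] at h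
  rcases h with h | h
  · -- median > m + ε : drop (l/2)
    have hdrop : ∀ a ∈ L.drop (l/2), m + ε < a := by
      intro a ha
      obtain ⟨i, hi⟩ := List.get_of_mem ha
      have hib : i.1 < L.length - l/2 := by simpa using i.2
      have hget : a = L.get ⟨l/2 + i.1, by omega⟩ := by
        rw [← hi]
        simp only [List.get_eq_getElem, List.getElem_drop]
      have hle : L[l/2] ≤ a := by
        rw [hget]
        exact hsorted' ⟨l/2, hmid⟩ ⟨l/2 + i.1, by omega⟩ (by simp)
      have : m + ε < L[l/2] := by rw [← hmed]; linarith
      linarith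
    have hcnt : (l : ℕ) - l/2 ≤ L.countP (fun a => decide (m + ε < a)) := by
      have heq : (L.drop (l/2)).countP (fun a => decide (m + ε < a)) =
          (L.drop (l/2)).length :=
        List.countP_eq_length.mpr (fun a ha => decide_eq_true (hdrop a ha))
      calc (l:ℕ) - l/2 = (L.drop (l/2)).length := by rw [List.length_drop, hlen]
        _ = (L.drop (l/2)).countP (fun a => decide (m + ε < a)) := heq.symm
        _ ≤ L.countP (fun a => decide (m + ε < a)) := by
            conv_rhs => rw [← List.take_append_drop (l/2) L]
            rw [List.countP_append]; omega
    rw [hcount (fun a => m + ε < a)] at hcnt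
    omega
  · -- median < m - ε : take (l/2 + 1)
    have htake : ∀ a ∈ L.take (l/2 + 1), a < m - ε := by
      intro a ha
      obtain ⟨i, hi⟩ := List.get_of_mem ha
      have hib : i.1 < (l/2 + 1) ⊓ L.length := by simpa using i.2
      have hget : a = L.get ⟨i.1, by omega⟩ := by
        rw [← hi]
        simp only [List.get_eq_getElem, List.getElem_take]
      have hle : a ≤ L[l/2] := by
        rw [hget]
        exact hsorted' ⟨i.1, by omega⟩ ⟨l/2, hmid⟩ (by simp; omega)
      have : L[l/2] < m - ε := by rw [← hmed]; linarith
      linarith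
    have hcnt : l/2 + 1 ≤ L.countP (fun a => decide (a < m - ε)) := by
      have heq : (L.take (l/2+1)).countP (fun a => decide (a < m - ε)) =
          (L.take (l/2+1)).length :=
        List.countP_eq_length.mpr (fun a ha => decide_eq_true (htake a ha))
      have hlt : (L.take (l/2+1)).length = l/2+1 := by
        rw [List.length_take, hlen]; omega
      calc l/2 + 1 = (L.take (l/2+1)).countP (fun a => decide (a < m - ε)) := by
            rw [heq, hlt]
        _ ≤ L.countP (fun a => decide (a < m - ε)) := by
            conv_rhs => rw [← List.take_append_drop (l/2+1) L]
            rw [List.countP_append]; omega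
    rw [hcount (fun a => a < m - ε)] at hcnt
    omega

lemma blocks_inter_le {Ω : Type*} [MeasurableSpace Ω] (P : Measure Ω) [IsProbabilityMeasure P]
    {ℓ k : ℕ} (G : Fin ℓ × Fin k → Ω → ℝ)
    (hmeas : ∀ p, Measurable (G p)) (hindep : iIndepFun G P)
    (s : Fin ℓ → Set (Fin k → ℝ)) (hs : ∀ i, MeasurableSet (s i))
    (S : Finset (Fin ℓ)) :
    P (⋂ i ∈ S, (fun ω => (fun j => G (i, j) ω)) ⁻¹' s i)
      = ∏ i ∈ S, P ((fun ω => (fun j => G (i, j) ω)) ⁻¹' s i) := by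
  classical
  induction S using Finset.induction_on with
  | empty => simp
  | @insert i S hiS ih =>
    rw [Finset.set_biInter_insert, Finset.prod_insert hiS, ← ih]
    -- independence of block i from blocks in S
    set Sb : Finset (Fin ℓ × Fin k) := {i} ×ˢ Finset.univ with hSb
    set Tb : Finset (Fin ℓ × Fin k) := S ×ˢ Finset.univ with hTb
    have hdisj : Disjoint Sb Tb := by
      rw [Finset.disjoint_left]
      rintro ⟨a, b⟩ hab hab'
      simp only [hSb, hTb, Finset.mem_product, Finset.mem_singleton] at hab hab'
      exact hiS (hab.1 ▸ hab'.1)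
    have hInd := hindep.indepFun_finset Sb Tb hdisj hmeas
    rw [indepFun_iff_measure_inter_preimage_eq_mul] at hInd
    -- sets in the pi spaces
    set sL : Set ((q : Sb) → ℝ) :=
      {v | (fun j : Fin k => v ⟨(i, j), by simp [hSb]⟩) ∈ s i} with hsL
    have hsLm : MeasurableSet sL := by
      have : Measurable (fun v : (q : Sb) → ℝ => (fun j : Fin k => v ⟨(i, j), by simp [hSb]⟩)) :=
        measurable_pi_lambda _ (fun j => measurable_pi_apply _)
      exact this (hs i)
    set sR : Set ((q : Tb) → ℝ) :=
      ⋂ (j : Fin ℓ) (hj : j ∈ S), (fun v : (q : Tb) → ℝ =>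
        (fun j' : Fin k => v ⟨(j, j'), by simp [hTb, hj]⟩)) ⁻¹' s j with hsR
    have hsRm : MeasurableSet sR := by
      apply MeasurableSet.iInter; intro j
      apply MeasurableSet.iInter; intro hj
      exact (measurable_pi_lambda _ (fun j' => measurable_pi_apply _)) (hs j)
    have hpreL : (fun ω (q : Sb) => G q ω) ⁻¹' sL
        = (fun ω => (fun j => G (i, j) ω)) ⁻¹' s i := rfl
    have hpreR : (fun ω (q : Tb) => G q ω) ⁻¹' sR
        = ⋂ j ∈ S, (fun ω => (fun j' => G (j, j') ω)) ⁻¹' s j := by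
      ext ω
      simp only [hsR, Set.mem_preimage, Set.mem_iInter]
    have := hInd sL sR hsLm hsRm
    rw [hpreL, hpreR] at this
    exact this

/-- Median-of-means bound: take ℓ independent empirical means, each over k i.i.d.
samples of a random variable with mean m and variance σ²; if σ²/(kε²) < 1/2, the
median M of the empirical means satisfies
Pr(|M - m| > ε) ≤ exp(-2ℓ(1/2 - σ²/(kε²))²). -/
theorem stmt_13 {Ω : Type*} [MeasurableSpace Ω] (P : Measure Ω) [IsProbabilityMeasure P]
    (ℓ k : ℕ) (hℓ : 0 < ℓ) (hk : 0 < k) (G : Fin ℓ × Fin k → Ω → ℝ) (m σ2 : ℝ)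
    (hmeas : ∀ p, Measurable (G p)) (hindep : iIndepFun G P)
    (hL2 : ∀ p, MemLp (G p) 2 P)
    (hmean : ∀ p, P[G p] = m) (hvar : ∀ p, variance (G p) P = σ2)
    (ε : ℝ) (hε : 0 < ε) (hcheb : σ2 / (k * ε ^ 2) < 1 / 2) :
    P {ω | ε < |tupleMedian (fun i => (∑ j, G (i, j) ω) / k) - m|} ≤
      ENNReal.ofReal (Real.exp (-2 * ℓ * (1 / 2 - σ2 / (k * ε ^ 2)) ^ 2)) := by
  classical
  have hk0 : (0:ℝ) < (k:ℝ) := by exact_mod_cast hk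
  set p : ℝ := σ2 / (↑k * ε^2) with hpdef
  have hσ2 : 0 ≤ σ2 := by
    have := variance_nonneg (G (⟨0,hℓ⟩, ⟨0,hk⟩)) P
    rw [hvar] at this; exact this
  have hp0 : 0 ≤ p := by rw [hpdef]; positivity
  set δ : ℝ := 1/2 - p with hδdef
  have hδ0 : 0 < δ := by rw [hδdef]; linarith
  set t : ℝ := 4*δ with htdef
  have ht0 : 0 < t := by rw [htdef]; linarith
  set c : ℝ := Real.exp t - 1 with hcdef
  have hc0 : 0 ≤ c := by
    have := Real.add_one_le_exp t
    rw [hcdef]; linarith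
  -- the block deviation sets
  set sP : Fin ℓ → Set (Fin k → ℝ) := fun _ => {v : Fin k → ℝ | ε < |(∑ j, v j)/↑k - m|}
    with hsPdef
  have hsPm : ∀ i, MeasurableSet (sP i) := by
    intro i
    apply measurableSet_lt measurable_const
    apply Measurable.abs
    exact ((Finset.univ.measurable_sum fun j _ => measurable_pi_apply j).div_const _).sub
      measurable_const
  set A : Fin ℓ → Set Ω := fun i => (fun ω => (fun j => G (i, j) ω)) ⁻¹' sP i with hAdef
  have hAmeas : ∀ i, MeasurableSet (A i) :=
    fun i => (measurable_pi_lambda _ (fun j => hmeas _)) (hsPm i)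
  -- Chebyshev for each block
  have hPA : ∀ i, P (A i) ≤ ENNReal.ofReal p := by
    intro i
    set X : Ω → ℝ := fun ω => (∑ j, G (i, j) ω)/↑k with hX
    have hXeq : X = (↑k:ℝ)⁻¹ • ∑ j, G (i, j) := by
      funext ω; simp [hX, Finset.sum_apply, div_eq_inv_mul]
    have hmem : MemLp X 2 P := by
      rw [hXeq]; exact (memLp_finset_sum' _ fun j _ => hL2 _).const_smul _
    have hmean' : P[X] = m := by
      have h0 : P[X] = (∫ ω, (∑ j, G (i, j) ω) ∂P) / (k:ℝ) := integral_div _ _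
      rw [h0, integral_finset_sum _ (fun j _ => (hL2 _).integrable one_le_two)]
      simp only [hmean, Finset.sum_const, Finset.card_univ, Fintype.card_fin, nsmul_eq_mul]
      field_simp
    have hvar' : variance X P = σ2 / ↑k := by
      rw [hXeq, variance_smul]
      rw [IndepFun.variance_sum (fun j _ => hL2 _) ?pairwise]
      · simp only [hvar, Finset.sum_const, Finset.card_univ, Fintype.card_fin,
          nsmul_eq_mul, smul_eq_mul]
        field_simp
      case pairwise =>
        intro a _ b _ hab
        exact hindep.indepFun (fun h => hab (congrArg Prod.snd h))
    have hsub : A i ⊆ {ω | ε ≤ |X ω - P[X]|} := by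
      intro ω hω
      rw [Set.mem_setOf_eq, hmean']
      exact le_of_lt hω
    calc P (A i) ≤ P {ω | ε ≤ |X ω - P[X]|} := measure_mono hsub
      _ ≤ ENNReal.ofReal (variance X P / ε^2) := meas_ge_le_variance_div_sq hmem hε
      _ = ENNReal.ofReal p := by rw [hvar', hpdef, div_div]
  -- intersections bound
  have hInter : ∀ S : Finset (Fin ℓ), P (⋂ i ∈ S, A i) ≤ ENNReal.ofReal p ^ S.card := by
    intro S
    rw [hAdef]
    rw [blocks_inter_le P G hmeas hindep sP hsPm S]
    calc ∏ i ∈ S, P ((fun ω => (fun j => G (i, j) ω)) ⁻¹' sP i)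
        ≤ ∏ _i ∈ S, ENNReal.ofReal p := Finset.prod_le_prod' (fun i _ => hPA i)
      _ = ENNReal.ofReal p ^ S.card := Finset.prod_const _
  -- the exponential-of-count function
  set C : ENNReal := ENNReal.ofReal c with hC
  set g : Ω → ENNReal := fun ω => ∏ i, (1 + C * (A i).indicator 1 ω) with hg
  have hgmeas : Measurable g := by
    apply Finset.measurable_prod
    intro i _
    exact ((measurable_one.indicator (hAmeas i)).const_mul C).const_add 1
  -- pointwise expansion
  have hgexp : g = fun ω => ∑ T ∈ (Finset.univ : Finset (Fin ℓ)).powerset,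
      C^T.card * (⋂ i ∈ T, A i).indicator 1 ω := by
    funext ω
    rw [hg]
    simp only
    have hcomm : ∀ i : Fin ℓ, (1 : ENNReal) + C * (A i).indicator 1 ω
        = C * (A i).indicator 1 ω + 1 := fun i => add_comm _ _
    rw [Finset.prod_congr rfl (fun i _ => hcomm i), Finset.prod_add]
    apply Finset.sum_congr rfl
    intro T _
    rw [Finset.prod_const_one, mul_one, Finset.prod_mul_distrib, Finset.prod_const]
    congr 1
    by_cases hmemT : ∀ i ∈ T, ω ∈ A i
    · rw [Set.indicator_of_mem (Set.mem_iInter₂.mpr hmemT)]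
      rw [Pi.one_apply]
      exact Finset.prod_eq_one fun i hi => by rw [Set.indicator_of_mem (hmemT i hi), Pi.one_apply]
    · push_neg at hmemT
      obtain ⟨i, hi, hni⟩ := hmemT
      rw [Set.indicator_of_notMem (by
        intro hmemI
        exact hni (Set.mem_iInter₂.mp hmemI i hi))]
      exact Finset.prod_eq_zero hi (Set.indicator_of_notMem hni _)
  -- integral bound
  have hlint : ∫⁻ ω, g ω ∂P ≤ (C * ENNReal.ofReal p + 1)^ℓ := by
    have hIm : ∀ T : Finset (Fin ℓ), MeasurableSet (⋂ i ∈ T, A i) :=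
      fun T => MeasurableSet.biInter T.countable_toSet (fun i _ => hAmeas i)
    have h1 : ∫⁻ ω, g ω ∂P = ∑ T ∈ (Finset.univ : Finset (Fin ℓ)).powerset,
        ∫⁻ ω, C^T.card * (⋂ i ∈ T, A i).indicator 1 ω ∂P := by
      simp only [hgexp]
      exact lintegral_finset_sum _ (fun T _ => (measurable_one.indicator (hIm T)).const_mul _)
    rw [h1]
    have hstep : ∀ T ∈ (Finset.univ : Finset (Fin ℓ)).powerset,
        ∫⁻ ω, C^T.card * (⋂ i ∈ T, A i).indicator 1 ω ∂P
          = C^T.card * P (⋂ i ∈ T, A i) := by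
      intro T _
      rw [lintegral_const_mul _ (measurable_one.indicator (hIm T)),
        lintegral_indicator_one (hIm T)]
    rw [Finset.sum_congr rfl hstep]
    calc ∑ T ∈ (Finset.univ : Finset (Fin ℓ)).powerset, C^T.card * P (⋂ i ∈ T, A i)
        ≤ ∑ T ∈ (Finset.univ : Finset (Fin ℓ)).powerset,
            (C * ENNReal.ofReal p)^T.card := by
          apply Finset.sum_le_sum
          intro T _
          rw [mul_pow]
          exact mul_le_mul_right (hInter T) _
      _ = ∑ n ∈ Finset.range (ℓ+1), ℓ.choose n • (C * ENNReal.ofReal p)^n := by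
          rw [Finset.sum_powerset_apply_card]
          simp [Finset.card_univ]
      _ = (C * ENNReal.ofReal p + 1)^ℓ := by
          rw [add_pow]
          apply Finset.sum_congr rfl
          intro n _
          rw [nsmul_eq_mul, one_pow, mul_one, mul_comm]
  -- Markov step
  set a : ENNReal := ENNReal.ofReal (Real.exp (t * ((ℓ:ℝ)/2))) with ha
  have ha0 : a ≠ 0 := ne_of_gt (ENNReal.ofReal_pos.mpr (Real.exp_pos _))
  have haT : a ≠ ⊤ := ENNReal.ofReal_ne_top
  have hsub : {ω | ε < |tupleMedian (fun i => (∑ j, G (i, j) ω) / ↑k) - m|}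
      ⊆ {ω | a ≤ g ω} := by
    intro ω hω
    have hN := median_count hℓ (fun i => (∑ j, G (i, j) ω) / ↑k) m ε (by exact hω)
    set N := (Finset.univ.filter (fun i => ε < |(∑ j, G (i, j) ω)/↑k - m|)).card with hNdef
    have hfe : (Finset.univ.filter (fun i => ω ∈ A i)) =
        (Finset.univ.filter (fun i : Fin ℓ => ε < |(∑ j, G (i, j) ω)/↑k - m|)) := by
      apply Finset.filter_congr
      intro i _
      exact Iff.rfl
    have hgω : g ω = ENNReal.ofReal (Real.exp (t * N)) := by
      rw [hg]
      simp only
      have hif : ∀ i : Fin ℓ, (1 + C * (A i).indicator 1 ω)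
          = if ω ∈ A i then ENNReal.ofReal (Real.exp t) else 1 := by
        intro i
        by_cases hi : ω ∈ A i
        · rw [if_pos hi, Set.indicator_of_mem hi, Pi.one_apply, mul_one, hC]
          rw [← ENNReal.ofReal_one, ← ENNReal.ofReal_add (by norm_num) hc0]
          congr 1
          rw [hcdef]; ring
        · rw [if_neg hi, Set.indicator_of_notMem hi, mul_zero, add_zero]
      rw [Finset.prod_congr rfl (fun i _ => hif i), Finset.prod_ite]
      rw [Finset.prod_const, Finset.prod_const, one_pow, mul_one]
      rw [hfe, ← hNdef]
      rw [← ENNReal.ofReal_pow (le_of_lt (Real.exp_pos t))]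
      congr 1
      rw [← Real.exp_nat_mul]
      ring_nf
    rw [Set.mem_setOf_eq, hgω, ha]
    apply ENNReal.ofReal_le_ofReal
    apply Real.exp_le_exp.mpr
    have hNR : (ℓ:ℝ) ≤ 2*N := by exact_mod_cast hN
    have : (ℓ:ℝ)/2 ≤ N := by linarith
    exact mul_le_mul_of_nonneg_left this (le_of_lt ht0)
  -- combine everything
  calc P {ω | ε < |tupleMedian (fun i => (∑ j, G (i, j) ω) / ↑k) - m|}
      ≤ P {ω | a ≤ g ω} := measure_mono hsub
    _ ≤ (∫⁻ ω, g ω ∂P) / a := by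
        rw [ENNReal.le_div_iff_mul_le (Or.inl ha0) (Or.inl haT), mul_comm]
        exact mul_meas_ge_le_lintegral₀ hgmeas.aemeasurable a
    _ ≤ (C * ENNReal.ofReal p + 1)^ℓ / a := ENNReal.div_le_div_right hlint a
    _ ≤ ENNReal.ofReal (Real.exp (-2*ℓ*δ^2)) := by
        have h1 : C * ENNReal.ofReal p + 1 = ENNReal.ofReal (c*p + 1) := by
          rw [ENNReal.ofReal_add (mul_nonneg hc0 hp0) zero_le_one, ENNReal.ofReal_one,
            ENNReal.ofReal_mul hc0, hC]
        rw [h1, ha, ← ENNReal.ofReal_pow (by positivity),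
          ← ENNReal.ofReal_div_of_pos (Real.exp_pos _)]
        apply ENNReal.ofReal_le_ofReal
        have hbase : (c*p+1)/Real.exp (t/2) ≤ Real.exp (-(2*δ^2)) := by
          have heq : (c*p+1)/Real.exp (t/2)
              = (1/2+δ)*Real.exp (-(2*δ)) + (1/2-δ)*Real.exp (2*δ) := by
            have ht2 : t/2 = 2*δ := by rw [htdef]; ring
            have hexp4 : Real.exp t = Real.exp (2*δ) * Real.exp (2*δ) := by
              rw [← Real.exp_add]; congr 1; rw [htdef]; ring
            have hpδ : p = 1/2 - δ := by rw [hδdef]; ring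
            rw [ht2, hcdef, hpδ, hexp4, Real.exp_neg]
            have hE := Real.exp_pos (2*δ)
            field_simp
            ring
          rw [heq]
          calc (1/2+δ)*Real.exp (-(2*δ)) + (1/2-δ)*Real.exp (2*δ)
              ≤ 1 - 2*δ^2 := hoeff_base (le_of_lt hδ0)
            _ ≤ Real.exp (-(2*δ^2)) := by linarith [Real.add_one_le_exp (-(2*δ^2))]
        calc (c*p+1)^ℓ / Real.exp (t*((ℓ:ℝ)/2))
            = ((c*p+1)/Real.exp (t/2))^ℓ := by
              rw [div_pow]
              congr 1
              rw [← Real.exp_nat_mul]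
              congr 1
              ring
          _ ≤ (Real.exp (-(2*δ^2)))^ℓ := pow_le_pow_left₀ (by positivity) hbase ℓ
          _ = Real.exp (-2*↑ℓ*δ^2) := by
              rw [← Real.exp_nat_mul]
              congr 1
              ring
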